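/- Let k be a field, B a commutative k-algebra with a k-algebra homomorphism π : B → k, and (K, ∂) a field extension of k with a B-operator ∂ on K. Let R and S be K-algebras equipped with B-operators ∂_R : R → R ⊗_k B and ∂_S : S → S ⊗_k B extending ∂ (i.e. ∂_R ∘ (K → R) = ((K → R) ⊗ id_B) ∘ ∂, and similarly for S). Then there exists a unique B-operator D : R ⊗_K S → (R ⊗_K S) ⊗_k B on R ⊗_K S such that the natural maps R → R ⊗_K S and S → R ⊗_K S preserve the B-operators, i.e. D(r ⊗ 1) = ((r ↦ r ⊗ 1) ⊗ id_B)(∂_R(r)) and D(1 ⊗ s) = ((s ↦ 1 ⊗ s) ⊗ id_B)(∂_S(s)) for all r ∈ R, s ∈ S. -/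
import Mathlib


open TensorProduct

attribute [local instance 2000] Algebra.toModule

/-- The underlying homomorphism extractor `∂₀ = (id_T ⊗ π) ∘ ∂` of a `B`-operator:
the algebra map `T ⊗[k] B → T` induced by `π : B → k` and `T ⊗[k] k ≅ T`. -/
noncomputable def BOp.counit (k T B : Type*) [CommSemiring k] [CommSemiring T] [Algebra k T]
    [CommSemiring B] [Algebra k B] (π : B →ₐ[k] k) : T ⊗[k] B →ₐ[k] T :=
  (Algebra.TensorProduct.rid k k T).toAlgHom.comp
    (Algebra.TensorProduct.map (AlgHom.id k T) π)

set_option maxHeartbeats 1000000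


lemma BOp.counit_tmul (k T B : Type*) [CommSemiring k] [CommSemiring T] [Algebra k T]
    [CommSemiring B] [Algebra k B] (π : B →ₐ[k] k) (t : T) (b : B) :
    BOp.counit k T B π (t ⊗ₜ b) = π b • t := by
  simp [BOp.counit]

lemma BOp.counit_naturality {k B : Type*} [CommSemiring k] [CommSemiring B] [Algebra k B]
    (π : B →ₐ[k] k) {T T' : Type*} [CommSemiring T] [Algebra k T]
    [CommSemiring T'] [Algebra k T'] (f : T →ₐ[k] T') (x : T ⊗[k] B) :
    BOp.counit k T' B π (Algebra.TensorProduct.map f (AlgHom.id k B) x) =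
      f (BOp.counit k T B π x) := by
  induction x using TensorProduct.induction_on with
  | zero => simp
  | tmul t b => simp [BOp.counit_tmul, map_smul]
  | add x y hx hy => simp [map_add, hx, hy]

theorem BOp.tensor_lift {k K : Type*} [Field k] [Field K] [Algebra k K]
    {R S T : Type*} [CommRing R] [Algebra k R] [Algebra K R] [IsScalarTower k K R]
    [CommRing S] [Algebra k S] [Algebra K S] [IsScalarTower k K S]
    [CommRing T] [Algebra k T]
    (e : K →ₐ[k] T) (fR : R →ₐ[k] T) (fS : S →ₐ[k] T)
    (hfR : fR.comp (IsScalarTower.toAlgHom k K R) = e)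
    (hfS : fS.comp (IsScalarTower.toAlgHom k K S) = e) :
    ∃ F : (R ⊗[K] S) →ₐ[k] T,
      (∀ r : R, F (r ⊗ₜ 1) = fR r) ∧ (∀ s : S, F (1 ⊗ₜ s) = fS s) := by
  letI : Algebra K T := e.toRingHom.toAlgebra
  have halg : ∀ x : K, algebraMap K T x = e x := fun _ => rfl
  let fR' : R →ₐ[K] T :=
    { toRingHom := fR.toRingHom
      commutes' := fun x => by
        have := congrArg (fun g : K →ₐ[k] T => g x) hfR
        simpa [halg] using this }
  let fS' : S →ₐ[K] T :=
    { toRingHom := fS.toRingHom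
      commutes' := fun x => by
        have := congrArg (fun g : K →ₐ[k] T => g x) hfS
        simpa [halg] using this }
  let F₀ : (R ⊗[K] S) →ₐ[K] T := Algebra.TensorProduct.productMap fR' fS'
  refine ⟨{ toRingHom := F₀.toRingHom, commutes' := fun x => ?_ }, fun r => ?_, fun s => ?_⟩
  · have h1 : algebraMap k (R ⊗[K] S) x = algebraMap K (R ⊗[K] S) (algebraMap k K x) := by
      rw [← IsScalarTower.algebraMap_apply]
    show F₀ (algebraMap k (R ⊗[K] S) x) = _
    rw [h1, F₀.commutes, halg, e.commutes]
  · show F₀ (r ⊗ₜ 1) = fR r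
    rw [Algebra.TensorProduct.productMap_apply_tmul]; simp; rfl
  · show F₀ (1 ⊗ₜ s) = fS s
    rw [Algebra.TensorProduct.productMap_apply_tmul]; simp; rfl

/-- (Proposition 2.15.) Let `(K, δ)` be a field with a `B`-operator and let `R`, `S` be
`K`-algebras with `B`-operators `δR`, `δS` extending `δ`. Then there is a unique `B`-operator
`D` on `R ⊗[K] S` such that the natural maps `R → R ⊗[K] S` and `S → R ⊗[K] S` preserve the
corresponding `B`-operators. -/
theorem BOperator.tensorProduct_unique
    (k B : Type*) [Field k] [CommRing B] [Algebra k B] (π : B →ₐ[k] k)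
    (K : Type*) [Field K] [Algebra k K]
    (δ : K →ₐ[k] K ⊗[k] B)
    (hδ0 : (BOp.counit k K B π).comp δ = AlgHom.id k K)
    (R S : Type*) [CommRing R] [Algebra k R] [Algebra K R] [IsScalarTower k K R]
    [CommRing S] [Algebra k S] [Algebra K S] [IsScalarTower k K S]
    (δR : R →ₐ[k] R ⊗[k] B)
    (hR0 : (BOp.counit k R B π).comp δR = AlgHom.id k R)
    (hRext : δR.comp (IsScalarTower.toAlgHom k K R) =
      (Algebra.TensorProduct.map (IsScalarTower.toAlgHom k K R) (AlgHom.id k B)).comp δ)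
    (δS : S →ₐ[k] S ⊗[k] B)
    (hS0 : (BOp.counit k S B π).comp δS = AlgHom.id k S)
    (hSext : δS.comp (IsScalarTower.toAlgHom k K S) =
      (Algebra.TensorProduct.map (IsScalarTower.toAlgHom k K S) (AlgHom.id k B)).comp δ) :
    ∃! D : (R ⊗[K] S) →ₐ[k] (R ⊗[K] S) ⊗[k] B,
      (BOp.counit k (R ⊗[K] S) B π).comp D = AlgHom.id k (R ⊗[K] S) ∧
      D.comp (Algebra.TensorProduct.includeLeft : R →ₐ[k] R ⊗[K] S) =
        (Algebra.TensorProduct.map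
          (Algebra.TensorProduct.includeLeft : R →ₐ[k] R ⊗[K] S) (AlgHom.id k B)).comp δR ∧
      D.comp ((Algebra.TensorProduct.includeRight : S →ₐ[K] R ⊗[K] S).restrictScalars k) =
        (Algebra.TensorProduct.map
          ((Algebra.TensorProduct.includeRight : S →ₐ[K] R ⊗[K] S).restrictScalars k)
          (AlgHom.id k B)).comp δS := by
  set incL : R →ₐ[k] R ⊗[K] S := Algebra.TensorProduct.includeLeft with hincL
  set incR : S →ₐ[k] R ⊗[K] S :=
    (Algebra.TensorProduct.includeRight : S →ₐ[K] R ⊗[K] S).restrictScalars k with hincR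
  set e : K →ₐ[k] (R ⊗[K] S) ⊗[k] B :=
    (Algebra.TensorProduct.map (IsScalarTower.toAlgHom k K (R ⊗[K] S))
      (AlgHom.id k B)).comp δ with he
  set fR : R →ₐ[k] (R ⊗[K] S) ⊗[k] B :=
    (Algebra.TensorProduct.map incL (AlgHom.id k B)).comp δR with hfRdef
  set fS : S →ₐ[k] (R ⊗[K] S) ⊗[k] B :=
    (Algebra.TensorProduct.map incR (AlgHom.id k B)).comp δS with hfSdef
  have hcompL : incL.comp (IsScalarTower.toAlgHom k K R) =
      IsScalarTower.toAlgHom k K (R ⊗[K] S) := by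
    ext x
    simp [hincL, Algebra.TensorProduct.algebraMap_apply]
  have hcompR : incR.comp (IsScalarTower.toAlgHom k K S) =
      IsScalarTower.toAlgHom k K (R ⊗[K] S) := by
    ext x
    simp [hincR]
  have hfR : fR.comp (IsScalarTower.toAlgHom k K R) = e := by
    rw [hfRdef, AlgHom.comp_assoc, hRext, ← AlgHom.comp_assoc,
      ← Algebra.TensorProduct.map_comp, hcompL, AlgHom.id_comp, he]
  have hfS : fS.comp (IsScalarTower.toAlgHom k K S) = e := by
    rw [hfSdef, AlgHom.comp_assoc, hSext, ← AlgHom.comp_assoc,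
      ← Algebra.TensorProduct.map_comp, hcompR, AlgHom.id_comp, he]
  obtain ⟨F, hFl, hFr⟩ := BOp.tensor_lift e fR fS hfR hfS
  have hcR : ∀ r : R, BOp.counit k (R ⊗[K] S) B π (fR r) = r ⊗ₜ 1 := by
    intro r
    rw [hfRdef]
    simp only [AlgHom.coe_comp, Function.comp_apply]
    rw [BOp.counit_naturality]
    have : BOp.counit k R B π (δR r) = r := congrArg (fun g : R →ₐ[k] R => g r) hR0
    rw [this]
    rfl
  have hcS : ∀ s : S, BOp.counit k (R ⊗[K] S) B π (fS s) = 1 ⊗ₜ s := by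
    intro s
    rw [hfSdef]
    simp only [AlgHom.coe_comp, Function.comp_apply]
    rw [BOp.counit_naturality]
    have : BOp.counit k S B π (δS s) = s := congrArg (fun g : S →ₐ[k] S => g s) hS0
    rw [this]
    rfl
  have htm : ∀ (r : R) (s : S), (r ⊗ₜ[K] s : R ⊗[K] S) = (r ⊗ₜ 1) * (1 ⊗ₜ s) := by
    intro r s
    rw [Algebra.TensorProduct.tmul_mul_tmul, mul_one, one_mul]
  refine ⟨F, ⟨?_, ?_, ?_⟩, ?_⟩
  · -- counit condition
    apply AlgHom.ext
    intro x
    induction x using TensorProduct.induction_on with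
    | zero => simp
    | tmul r s =>
        simp only [AlgHom.coe_comp, Function.comp_apply, AlgHom.coe_id, id_eq]
        rw [htm r s, map_mul, hFl, hFr, map_mul, hcR, hcS, ← htm]
    | add x y hx hy =>
        simp only [AlgHom.coe_comp, Function.comp_apply, AlgHom.coe_id, id_eq] at hx hy ⊢
        rw [map_add, map_add, hx, hy]
  · apply AlgHom.ext; intro r
    simpa [hincL] using hFl r
  · apply AlgHom.ext; intro s
    simpa [hincR] using hFr s
  · rintro D ⟨-, h1, h2⟩
    apply AlgHom.ext
    intro x
    induction x using TensorProduct.induction_on with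
    | zero => simp
    | tmul r s =>
        have hD1 : D (incL r) = fR r := AlgHom.congr_fun h1 r
        have hD2 : D (incR s) = fS s := AlgHom.congr_fun h2 s
        rw [hincL, Algebra.TensorProduct.includeLeft_apply] at hD1
        rw [hincR, AlgHom.coe_restrictScalars', Algebra.TensorProduct.includeRight_apply] at hD2
        rw [htm r s, map_mul, map_mul, hD1, hD2, hFl, hFr]
    | add x y hx hy => rw [map_add, map_add, hx, hy]
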